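/- Let p, q > 0 with p + q = 1. Let a = (a_1,…,a_n) with a_1 ≥ … ≥ a_n > 0, b = (b_1,…,b_n) with b_1 ≥ … ≥ b_n ≥ 0, and let x = (x_1,…,x_n) with x_1 ≥ … ≥ x_n ≥ 0 and x ≺ b be such that Σ_{j=1}^n a_j^p x_j^q ≥ Σ_{j=1}^n a_j^p y_j^q for every y = (y_1,…,y_n) with y_1 ≥ … ≥ y_n ≥ 0 and y ≺ b. Then: (a) there exist indices 0 = n_0 < n_1 < … < n_k = n such that for each 0 ≤ i < k, Σ_{j=n_i+1}^{n_{i+1}} x_j = Σ_{j=n_i+1}^{n_{i+1}} b_j and (x_{n_i+1},…,x_{n_{i+1}}) = α_i (a_{n_i+1},…,a_{n_{i+1}}), where α_i = (b_{n_i+1}+…+b_{n_{i+1}})/(a_{n_i+1}+…+a_{n_{i+1}}); (b) these indices are given by n_{i+1} = max{ r : n_i < r ≤ n and α (a_{n_i+1},…,a_r) ≺ (b_{n_i+1},…,b_r), where α = (b_{n_i+1}+…+b_r)/(a_{n_i+1}+…+a_r) }. -/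

import Mathlib

open Matrix
open scoped ComplexOrder Classical

/-- The vector of a tuple's entries sorted in decreasing (nonincreasing) order. -/
noncomputable def sortDec {n : ℕ} (x : Fin n → ℝ) : Fin n → ℝ :=
  fun i => x (Tuple.sort x i.rev)

/-- The eigenvalues of a Hermitian matrix arranged in decreasing order,
`λ(A)`; junk value `0` if `A` is not Hermitian. -/
noncomputable def eigsDec {n : ℕ} (A : Matrix (Fin n) (Fin n) ℂ) : Fin n → ℝ :=
  if hA : A.IsHermitian then sortDec hA.eigenvalues else 0

/-- The eigenvalues of a Hermitian matrix arranged in increasing order. -/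
noncomputable def eigsInc {n : ℕ} (A : Matrix (Fin n) (Fin n) ℂ) : Fin n → ℝ :=
  fun i => eigsDec A i.rev

/-- `Λ↓(A)`: the diagonal matrix of the eigenvalues of `A` in decreasing order. -/
noncomputable def LambdaDown {n : ℕ} (A : Matrix (Fin n) (Fin n) ℂ) :
    Matrix (Fin n) (Fin n) ℂ :=
  Matrix.diagonal fun i => (eigsDec A i : ℂ)

/-- `Λ↑(A)`: the diagonal matrix of the eigenvalues of `A` in increasing order. -/
noncomputable def LambdaUp {n : ℕ} (A : Matrix (Fin n) (Fin n) ℂ) :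
    Matrix (Fin n) (Fin n) ℂ :=
  Matrix.diagonal fun i => (eigsInc A i : ℂ)

/-- `x ≺ y`: the sum of the `k` largest entries of `x` is at most that of `y`
for every `k`, with equality of the total sums. -/
def Majorizes {n : ℕ} (x y : Fin n → ℝ) : Prop :=
  (∀ k : ℕ, ∑ i ∈ Finset.univ.filter (fun i : Fin n => (i : ℕ) < k), sortDec x i ≤
      ∑ i ∈ Finset.univ.filter (fun i : Fin n => (i : ℕ) < k), sortDec y i) ∧
    (∑ i, x i) = ∑ i, y i

/-- A function `d` is Schur-convex if `x ≺ y` implies `d x ≤ d y`. -/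
def SchurConvex {n : ℕ} (d : (Fin n → ℝ) → ℝ) : Prop :=
  ∀ x y : Fin n → ℝ, Majorizes x y → d x ≤ d y

/-- A density matrix: positive semidefinite with trace one. -/
def IsDensityMatrix {n : ℕ} (ρ : Matrix (Fin n) (Fin n) ℂ) : Prop :=
  ρ.PosSemidef ∧ ρ.trace = 1

/-- A quantum channel: completely positive trace preserving map in Kraus form. -/
def IsQuantumChannel {n : ℕ}
    (Φ : Matrix (Fin n) (Fin n) ℂ → Matrix (Fin n) (Fin n) ℂ) : Prop :=
  ∃ (r : ℕ) (F : Fin r → Matrix (Fin n) (Fin n) ℂ),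
    (∑ j, (F j)ᴴ * F j) = 1 ∧ ∀ X, Φ X = ∑ j, F j * X * (F j)ᴴ

/-- A unital quantum channel. -/
def IsUnitalChannel {n : ℕ}
    (Φ : Matrix (Fin n) (Fin n) ℂ → Matrix (Fin n) (Fin n) ℂ) : Prop :=
  IsQuantumChannel Φ ∧ Φ 1 = 1

/-- A mixed unitary channel: a convex combination of unitary conjugations. -/
def IsMixedUnitaryChannel {n : ℕ}
    (Φ : Matrix (Fin n) (Fin n) ℂ → Matrix (Fin n) (Fin n) ℂ) : Prop :=
  ∃ (r : ℕ) (t : Fin r → ℝ) (U : Fin r → Matrix (Fin n) (Fin n) ℂ),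
    (∀ j, 0 ≤ t j) ∧ (∑ j, t j) = 1 ∧
      (∀ j, U j ∈ Matrix.unitaryGroup (Fin n) ℂ) ∧
      ∀ X, Φ X = ∑ j, (t j : ℂ) • (U j * X * (U j)ᴴ)

/-- Functional calculus: `f(A)` for a Hermitian matrix `A`, via the spectral theorem;
junk value `0` if `A` is not Hermitian. -/
noncomputable def matFun {n : ℕ} (f : ℝ → ℝ) (A : Matrix (Fin n) (Fin n) ℂ) :
    Matrix (Fin n) (Fin n) ℂ :=
  if hA : A.IsHermitian then
    (hA.eigenvectorUnitary : Matrix (Fin n) (Fin n) ℂ) *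
      Matrix.diagonal (fun i => (f (hA.eigenvalues i) : ℂ)) *
      (hA.eigenvectorUnitary : Matrix (Fin n) (Fin n) ℂ)ᴴ
  else 0

/-- The positive semidefinite square root of a PSD matrix, as `Matrix.PosSemidef.sqrt`
was defined in Mathlib (Dec 2024); that definition has since been removed. -/
noncomputable def posSemidefSqrtOld {n : ℕ} {A : Matrix (Fin n) (Fin n) ℂ} (hA : A.PosSemidef) :
    Matrix (Fin n) (Fin n) ℂ :=
  (hA.1.eigenvectorUnitary : Matrix (Fin n) (Fin n) ℂ) *
    Matrix.diagonal (fun i => ((Real.sqrt (hA.1.eigenvalues i) : ℝ) : ℂ)) *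
    (star hA.1.eigenvectorUnitary : Matrix (Fin n) (Fin n) ℂ)

/-- `|A| = (AᴴA)^{1/2}`. -/
noncomputable def matAbs {n : ℕ} (A : Matrix (Fin n) (Fin n) ℂ) :
    Matrix (Fin n) (Fin n) ℂ :=
  posSemidefSqrtOld (Matrix.posSemidef_conjTranspose_mul_self A)

/-- `tr|A|`, the sum of the singular values of `A`. -/
noncomputable def traceAbs {n : ℕ} (A : Matrix (Fin n) (Fin n) ℂ) : ℝ :=
  ((matAbs A).trace).re

/-- The singular values of `A` in decreasing order. -/
noncomputable def singVals {n : ℕ} (A : Matrix (Fin n) (Fin n) ℂ) : Fin n → ℝ :=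
  eigsDec (matAbs A)

/-- The positive semidefinite square root of a PSD matrix (junk value `0` otherwise). -/
noncomputable def matSqrt {n : ℕ} (A : Matrix (Fin n) (Fin n) ℂ) :
    Matrix (Fin n) (Fin n) ℂ :=
  if hA : A.PosSemidef then posSemidefSqrtOld hA else 0

/-- The fidelity `F(ρ,σ) = tr|ρ^{1/2} σ^{1/2}|`. -/
noncomputable def fidelity {n : ℕ} (ρ σ : Matrix (Fin n) (Fin n) ℂ) : ℝ :=
  traceAbs (matSqrt ρ * matSqrt σ)

/-- The relative entropy `S(ρ‖σ) = tr(ρ (log ρ - log σ))`. -/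
noncomputable def relEntropy {n : ℕ} (ρ σ : Matrix (Fin n) (Fin n) ℂ) : ℝ :=
  ((ρ * (matFun Real.log ρ - matFun Real.log σ)).trace).re

/-- The (real) trace of a matrix whose trace is real. -/
noncomputable def trR {n : ℕ} (A : Matrix (Fin n) (Fin n) ℂ) : ℝ := A.trace.re

/-- The sum of the entries `v_i` with `m ≤ i < k` (0-indexed). -/
noncomputable def segSum {n : ℕ} (v : Fin n → ℝ) (m k : ℕ) : ℝ :=
  ∑ i ∈ Finset.univ.filter (fun i : Fin n => m ≤ (i : ℕ) ∧ (i : ℕ) < k), v i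

/-- Normalized majorization of the segment of `a` on `[m, k)` by the corresponding segment of
`b` (both segments being nonincreasing), written in cross-multiplied form:
`(Σ_{m ≤ i < p} a_i)/(Σ_{m ≤ i < k} a_i) ≤ (Σ_{m ≤ i < p} b_i)/(Σ_{m ≤ i < k} b_i)`
for all `m ≤ p ≤ k`. -/
def SegMaj {n : ℕ} (a b : Fin n → ℝ) (m k : ℕ) : Prop :=
  ∀ p : ℕ, m ≤ p → p ≤ k →
    segSum a m p * segSum b m k ≤ segSum b m p * segSum a m k

namespace S19

variable {n : ℕ}

/-- extension of a `Fin n` tuple to `ℕ` by zero. -/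
noncomputable def ext (v : Fin n → ℝ) : ℕ → ℝ := fun i => if h : i < n then v ⟨i, h⟩ else 0

noncomputable def S (v : Fin n → ℝ) (m k : ℕ) : ℝ := ∑ i ∈ Finset.Ico m k, ext v i

lemma ext_eq_zero {v : Fin n → ℝ} {i : ℕ} (h : ¬ i < n) : ext v i = 0 := by
  simp [ext, h]

lemma segSum_eq (v : Fin n → ℝ) (m k : ℕ) : segSum v m k = S v m k := by
  have h1 : segSum v m k = ∑ i ∈ Finset.range n, (if m ≤ i ∧ i < k then ext v i else 0) := by
    rw [segSum, Finset.sum_filter, ← Fin.sum_univ_eq_sum_range]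
    apply Finset.sum_congr rfl; intro i _
    simp [ext, i.isLt]
  have h2 : (Finset.Ico m k).filter (fun i => i < n) =
      (Finset.range n).filter (fun i => m ≤ i ∧ i < k) := by
    ext i
    simp only [Finset.mem_filter, Finset.mem_Ico, Finset.mem_range]
    tauto
  have h3 : S v m k = ∑ i ∈ (Finset.Ico m k).filter (fun i => i < n), ext v i :=
    (Finset.sum_filter_of_ne (fun x _ hx => by
      by_contra h; exact hx (ext_eq_zero h))).symm
  rw [h1, h3, h2, Finset.sum_filter]

lemma S_empty (v : Fin n → ℝ) {m k : ℕ} (h : k ≤ m) : S v m k = 0 := by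
  rw [S, Finset.Ico_eq_empty (by omega), Finset.sum_empty]

lemma S_split (v : Fin n → ℝ) {m k l : ℕ} (h1 : m ≤ k) (h2 : k ≤ l) :
    S v m l = S v m k + S v k l := by
  rw [S, S, S, Finset.sum_Ico_consecutive _ h1 h2]

lemma S_single (v : Fin n → ℝ) (m : ℕ) : S v m (m + 1) = ext v m := by
  rw [S, Finset.sum_Ico_succ_top (le_refl m), Finset.Ico_self, Finset.sum_empty, zero_add]

lemma ext_nonneg {v : Fin n → ℝ} (hv : ∀ i, 0 ≤ v i) (i : ℕ) : 0 ≤ ext v i := by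
  unfold ext; split <;> simp [hv]

lemma S_nonneg {v : Fin n → ℝ} (hv : ∀ i, 0 ≤ v i) (m k : ℕ) : 0 ≤ S v m k :=
  Finset.sum_nonneg fun i _ => ext_nonneg hv i

lemma S_pos {v : Fin n → ℝ} (hv : ∀ i, 0 < v i) {m k : ℕ} (hm : m < k) (hn : m < n) :
    0 < S v m k := by
  have h1 : ext v m ≤ S v m k :=
    Finset.single_le_sum (fun i _ => ext_nonneg (fun j => (hv j).le) i)
      (Finset.mem_Ico.mpr ⟨le_refl m, hm⟩)
  have h2 : 0 < ext v m := by simp [ext, hn]; exact hv _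
  linarith

lemma ext_antitone {v : Fin n → ℝ} (hv : ∀ i j : Fin n, i ≤ j → v j ≤ v i)
    (hv0 : ∀ i, 0 ≤ v i) {i j : ℕ} (hij : i ≤ j) : ext v j ≤ ext v i := by
  unfold ext
  by_cases hj : j < n
  · have hi : i < n := lt_of_le_of_lt hij hj
    simp only [hi, hj, dif_pos]
    exact hv ⟨i, hi⟩ ⟨j, hj⟩ hij
  · by_cases hi : i < n <;> simp [hi, hj, hv0]

lemma sortDec_eq_self {v : Fin n → ℝ} (hv : ∀ i j : Fin n, i ≤ j → v j ≤ v i) :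
    sortDec v = v := by
  have hmono : Monotone (v ∘ (Fin.revPerm : Equiv.Perm (Fin n))) := by
    intro i j hij
    exact hv _ _ (Fin.rev_le_rev.mpr hij)
  have h := Tuple.comp_sort_eq_comp_iff_monotone.mpr hmono
  funext i
  have := congrFun h.symm i.rev
  simp only [Function.comp_apply, Fin.revPerm_apply, Fin.rev_rev] at this
  simpa [sortDec] using this

end S19

namespace S19

variable {n : ℕ}

/-- prefix sums -/
noncomputable def Pre (v : Fin n → ℝ) (k : ℕ) : ℝ := S v 0 k

lemma Pre_split (v : Fin n → ℝ) {m k : ℕ} (h : m ≤ k) : Pre v k = Pre v m + S v m k :=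
  S_split v (Nat.zero_le m) h

lemma filter_sum_eq_Pre (v : Fin n → ℝ) (k : ℕ) :
    ∑ i ∈ Finset.univ.filter (fun i : Fin n => (i : ℕ) < k), v i = Pre v k := by
  have : segSum v 0 k = ∑ i ∈ Finset.univ.filter (fun i : Fin n => (i : ℕ) < k), v i := by
    rw [segSum]
    apply Finset.sum_congr _ (fun _ _ => rfl)
    ext i; simp
  rw [← this, segSum_eq]; rfl

lemma total_eq_Pre (v : Fin n → ℝ) : ∑ i, v i = Pre v n := by
  rw [← filter_sum_eq_Pre]
  apply Finset.sum_congr _ (fun _ _ => rfl)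
  ext i; simp [i.isLt]

lemma Pre_stab (v : Fin n → ℝ) {k : ℕ} (hk : n ≤ k) : Pre v k = Pre v n := by
  rw [Pre_split v hk, add_eq_left]
  apply Finset.sum_eq_zero
  intro i hi
  exact ext_eq_zero (by simp only [Finset.mem_Ico] at hi; omega)

lemma maj_iff {u w : Fin n → ℝ} (hu : ∀ i j : Fin n, i ≤ j → u j ≤ u i)
    (hw : ∀ i j : Fin n, i ≤ j → w j ≤ w i) :
    Majorizes u w ↔ (∀ K : ℕ, Pre u K ≤ Pre w K) ∧ Pre u n = Pre w n := by
  rw [Majorizes, sortDec_eq_self hu, sortDec_eq_self hw]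
  simp only [filter_sum_eq_Pre, total_eq_Pre]

/-- Abel summation bound. -/
lemma abel_le {c d : ℕ → ℝ} : ∀ (k : ℕ), (∀ i j, i ≤ j → j ≤ k → c j ≤ c i) →
    (∀ j ≤ k, ∑ i ∈ Finset.range j, d i ≤ 0) →
    ∑ i ∈ Finset.range k, c i * d i ≤ c k * ∑ i ∈ Finset.range k, d i := by
  intro k
  induction k with
  | zero => simp
  | succ k ih =>
    intro hc hD
    have h1 := ih (fun i j hij hjk => hc i j hij (by omega)) (fun j hj => hD j (by omega))
    rw [Finset.sum_range_succ, Finset.sum_range_succ, mul_add]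
    have h2 : c (k+1) * ∑ i ∈ Finset.range k, d i + c (k+1) * d k
        = c (k+1) * ∑ i ∈ Finset.range (k+1), d i := by
      rw [← mul_add, Finset.sum_range_succ]
    have h3 : c k * ∑ i ∈ Finset.range (k+1), d i ≤ c (k+1) * ∑ i ∈ Finset.range (k+1), d i :=
      mul_le_mul_of_nonpos_right (hc k (k+1) (by omega) (le_refl _)) (hD (k+1) (le_refl _))
    calc ∑ i ∈ Finset.range k, c i * d i + c k * d k
        ≤ c k * ∑ i ∈ Finset.range k, d i + c k * d k := by linarith
      _ = c k * ∑ i ∈ Finset.range (k+1), d i := by rw [← mul_add, Finset.sum_range_succ]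
      _ ≤ c (k+1) * ∑ i ∈ Finset.range (k+1), d i := h3
      _ = c (k+1) * ∑ x ∈ Finset.range k, d x + c (k+1) * d k := by
          rw [← mul_add, Finset.sum_range_succ]

/-- tangent line bound for concave rpow -/
lemma rpow_tangent {q : ℝ} (hq : 0 < q) (hq1 : q < 1) {T B : ℝ} (hT : 0 ≤ T) (hB : 0 < B) :
    T ^ q ≤ B ^ q + q * B ^ (q - 1) * (T - B) := by
  have key : (T / B) ^ q * 1 ^ (1 - q) ≤ q * (T / B) + (1 - q) * 1 :=
    Real.geom_mean_le_arith_mean2_weighted hq.le (by linarith) (div_nonneg hT hB.le)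
      zero_le_one (by ring)
  rw [Real.one_rpow, mul_one, mul_one] at key
  have hBq : (0:ℝ) < B ^ q := Real.rpow_pos_of_pos hB q
  have h2 : (T / B) ^ q = T ^ q / B ^ q := Real.div_rpow hT hB.le q
  rw [h2] at key
  have h3 : T ^ q ≤ (q * (T / B) + (1 - q)) * B ^ q := by
    rw [div_le_iff₀ hBq] at key; linarith
  have h4 : B ^ (q - 1) = B ^ q / B := by
    rw [Real.rpow_sub hB, Real.rpow_one]
  rw [h4]
  have hB' : B ≠ 0 := hB.ne'
  calc T ^ q ≤ (q * (T / B) + (1 - q)) * B ^ q := h3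
    _ = B ^ q + q * (B ^ q / B) * (T - B) := by field_simp; ring
    _ = _ := rfl

/-- strict midpoint concavity of rpow -/
lemma rpow_mid {q : ℝ} (hq : 0 < q) (hq1 : q < 1) {s t : ℝ} (hs : 0 ≤ s) (ht : 0 ≤ t)
    (hne : s ≠ t) : (s ^ q + t ^ q) / 2 < ((s + t) / 2) ^ q := by
  have h := (Real.strictConcaveOn_rpow hq hq1).2 (Set.mem_Ici.mpr hs) (Set.mem_Ici.mpr ht)
    hne (by norm_num : (0:ℝ) < 1/2) (by norm_num : (0:ℝ) < 1/2) (by norm_num)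
  simp only [smul_eq_mul] at h
  calc (s ^ q + t ^ q) / 2 = 1/2 * s ^ q + 1/2 * t ^ q := by ring
    _ < (1/2 * s + 1/2 * t) ^ q := h
    _ = ((s + t) / 2) ^ q := by ring_nf

lemma rpow_mid_le {q : ℝ} (hq : 0 < q) (hq1 : q < 1) {s t : ℝ} (hs : 0 ≤ s) (ht : 0 ≤ t) :
    (s ^ q + t ^ q) / 2 ≤ ((s + t) / 2) ^ q := by
  by_cases hne : s = t
  · subst hne; rw [show (s + s)/2 = s by ring, show (s ^ q + s ^ q)/2 = s ^ q by ring]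
  · exact (rpow_mid hq hq1 hs ht hne).le

end S19

namespace S19

variable {n : ℕ} (a b : Fin n → ℝ)

lemma segMaj_succ (m : ℕ) : SegMaj a b m (m + 1) := by
  intro p hp1 hp2
  rcases (by omega : p = m ∨ p = m + 1) with rfl | rfl
  · simp [segSum_eq, S_empty a (le_refl p), S_empty b (le_refl p)]
  · exact le_of_eq (mul_comm _ _)

noncomputable def nxt (m : ℕ) : ℕ := Nat.findGreatest (fun r => m < r ∧ SegMaj a b m r) n

lemma nxt_gt {m : ℕ} (hm : m < n) : m < nxt a b m :=
  lt_of_lt_of_le (Nat.lt_succ_self m)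
    (Nat.le_findGreatest hm ⟨Nat.lt_succ_self m, segMaj_succ a b m⟩)

lemma nxt_le (m : ℕ) : nxt a b m ≤ n := Nat.findGreatest_le n

lemma nxt_seg {m : ℕ} (hm : m < n) : SegMaj a b m (nxt a b m) :=
  (Nat.findGreatest_spec (P := fun r => m < r ∧ SegMaj a b m r) hm
    ⟨Nat.lt_succ_self m, segMaj_succ a b m⟩).2

lemma nxt_max {m r : ℕ} (h1 : m < r) (h2 : r ≤ n) (h3 : SegMaj a b m r) : r ≤ nxt a b m :=
  Nat.le_findGreatest h2 ⟨h1, h3⟩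

noncomputable def nIdxF : ℕ → ℕ
  | 0 => 0
  | i + 1 => if nIdxF i < n then nxt a b (nIdxF i) else n

lemma nIdxF_le : ∀ i, nIdxF a b i ≤ n := by
  intro i
  induction i with
  | zero => simp [nIdxF]
  | succ i ih =>
    rw [nIdxF]
    split
    · exact nxt_le a b _
    · exact le_refl n

lemma nIdxF_reach : nIdxF a b n = n := by
  have key : ∀ i, i ≤ nIdxF a b i ∨ nIdxF a b i = n := by
    intro i
    induction i with
    | zero => left; exact le_refl 0
    | succ i ih =>
      rw [nIdxF]
      split
      · rename_i h
        rcases ih with h' | h'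
        · left; have := nxt_gt a b h; omega
        · omega
      · right; rfl
  rcases key n with h | h
  · exact le_antisymm (nIdxF_le a b n) h
  · exact h

noncomputable def kk : ℕ := Nat.find (p := fun i => nIdxF a b i = n) ⟨n, nIdxF_reach a b⟩

lemma kk_spec : nIdxF a b (kk a b) = n := Nat.find_spec (p := fun i => nIdxF a b i = n) _

lemma lt_of_lt_kk {i : ℕ} (h : i < kk a b) : nIdxF a b i < n :=
  lt_of_le_of_ne (nIdxF_le a b i) (Nat.find_min (p := fun i => nIdxF a b i = n) _ h)

lemma nIdxF_succ_eq {i : ℕ} (h : i < kk a b) :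
    nIdxF a b (i + 1) = nxt a b (nIdxF a b i) := by
  rw [nIdxF, if_pos (lt_of_lt_kk a b h)]

lemma nIdxF_strict {i : ℕ} (h : i < kk a b) : nIdxF a b i < nIdxF a b (i + 1) := by
  rw [nIdxF_succ_eq a b h]; exact nxt_gt a b (lt_of_lt_kk a b h)

lemma nIdxF_seg {i : ℕ} (h : i < kk a b) :
    SegMaj a b (nIdxF a b i) (nIdxF a b (i + 1)) := by
  rw [nIdxF_succ_eq a b h]; exact nxt_seg a b (lt_of_lt_kk a b h)

lemma nIdxF_max {i : ℕ} (h : i < kk a b) {r : ℕ} (h1 : nIdxF a b i < r) (h2 : r ≤ n)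
    (h3 : SegMaj a b (nIdxF a b i) r) : r ≤ nIdxF a b (i + 1) := by
  rw [nIdxF_succ_eq a b h]; exact nxt_max a b h1 h2 h3

lemma nIdxF_mono : Monotone (nIdxF a b) := by
  apply monotone_nat_of_le_succ
  intro i
  conv_rhs => rw [nIdxF]
  split
  · rename_i h; exact (nxt_gt a b h).le
  · exact nIdxF_le a b i

noncomputable def blk (j : ℕ) : ℕ := Nat.findGreatest (fun i => nIdxF a b i ≤ j) (kk a b)

lemma blk_le (j : ℕ) : nIdxF a b (blk a b j) ≤ j :=
  Nat.findGreatest_spec (P := fun i => nIdxF a b i ≤ j) (Nat.zero_le _) (by simp [nIdxF])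

lemma blk_lt {j : ℕ} (hj : j < n) : blk a b j < kk a b := by
  have h1 : blk a b j ≤ kk a b := Nat.findGreatest_le _
  rcases lt_or_eq_of_le h1 with h | h
  · exact h
  · exfalso
    have := blk_le a b j
    rw [h, kk_spec] at this
    omega

lemma blk_ub {j : ℕ} (hj : j < n) : j < nIdxF a b (blk a b j + 1) := by
  by_contra h
  push_neg at h
  have h2 : blk a b j + 1 ≤ kk a b := blk_lt a b hj
  have h3 : blk a b j + 1 ≤ blk a b j :=
    Nat.le_findGreatest (P := fun i => nIdxF a b i ≤ j) h2 h
  omega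

lemma blk_eq {i j : ℕ} (hi : i < kk a b) (h1 : nIdxF a b i ≤ j)
    (h2 : j < nIdxF a b (i + 1)) : blk a b j = i := by
  have hle : i ≤ blk a b j := Nat.le_findGreatest (P := fun i => nIdxF a b i ≤ j) hi.le h1
  have hge : blk a b j ≤ i := by
    by_contra h
    push_neg at h
    have := nIdxF_mono a b (show i + 1 ≤ blk a b j by omega)
    have := blk_le a b j
    omega
  omega

end S19

namespace S19

variable {n : ℕ} {a b : Fin n → ℝ}

lemma single_le_S {v : Fin n → ℝ} (hv : ∀ i, 0 ≤ v i) {m k : ℕ} (hm : m < k) :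
    ext v m ≤ S v m k :=
  Finset.single_le_sum (fun i _ => ext_nonneg hv i) (Finset.mem_Ico.mpr ⟨le_refl m, hm⟩)

lemma S_mono_right {v : Fin n → ℝ} (hv : ∀ i, 0 ≤ v i) {m k k' : ℕ} (h : k ≤ k') :
    S v m k ≤ S v m k' := by
  by_cases hmk : m ≤ k
  · rw [S_split v hmk h]
    have := S_nonneg hv k k'
    linarith
  · rw [S_empty v (by omega)]
    exact S_nonneg hv m k'

noncomputable def Ai (a b : Fin n → ℝ) (i : ℕ) : ℝ :=
  S a (nIdxF a b i) (nIdxF a b (i + 1))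

noncomputable def Bi (a b : Fin n → ℝ) (i : ℕ) : ℝ :=
  S b (nIdxF a b i) (nIdxF a b (i + 1))

noncomputable def alf (a b : Fin n → ℝ) (i : ℕ) : ℝ := Bi a b i / Ai a b i

lemma Ai_pos (hapos : ∀ i, 0 < a i) {i : ℕ} (hi : i < kk a b) : 0 < Ai a b i :=
  S_pos hapos (nIdxF_strict a b hi) (lt_of_lt_kk a b hi)

lemma Bi_nonneg (hbnn : ∀ i, 0 ≤ b i) (i : ℕ) : 0 ≤ Bi a b i := S_nonneg hbnn _ _

lemma alf_nonneg (hapos : ∀ i, 0 < a i) (hbnn : ∀ i, 0 ≤ b i) (i : ℕ) :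
    0 ≤ alf a b i := by
  exact div_nonneg (Bi_nonneg hbnn i) (S_nonneg (fun j => (hapos j).le) _ _)

lemma alf_mul (hapos : ∀ i, 0 < a i) {i : ℕ} (hi : i < kk a b) :
    alf a b i * Ai a b i = Bi a b i :=
  div_mul_cancel₀ _ (Ai_pos hapos hi).ne'

/-- From block SegMaj: normalized prefix bound. -/
lemma seg_prefix (hapos : ∀ i, 0 < a i) {i : ℕ} (hi : i < kk a b) {pp : ℕ}
    (h1 : nIdxF a b i ≤ pp) (h2 : pp ≤ nIdxF a b (i + 1)) :
    alf a b i * S a (nIdxF a b i) pp ≤ S b (nIdxF a b i) pp := by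
  have hseg := nIdxF_seg a b hi pp h1 h2
  rw [segSum_eq, segSum_eq, segSum_eq, segSum_eq] at hseg
  have hA := Ai_pos hapos hi
  rw [alf, div_mul_eq_mul_div, div_le_iff₀ hA]
  calc Bi a b i * S a (nIdxF a b i) pp = S a (nIdxF a b i) pp * Bi a b i := mul_comm _ _
    _ ≤ S b (nIdxF a b i) pp * Ai a b i := hseg
    _ = S b (nIdxF a b i) pp * Ai a b i := rfl

/-- Conversely, normalized prefix bounds give SegMaj. -/
lemma segMaj_of_prefix {m k : ℕ} (hSa : 0 < S a m k)
    (h : ∀ pp, m ≤ pp → pp ≤ k → (S b m k / S a m k) * S a m pp ≤ S b m pp) :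
    SegMaj a b m k := by
  intro pp h1 h2
  rw [segSum_eq, segSum_eq, segSum_eq, segSum_eq]
  have := h pp h1 h2
  rw [div_mul_eq_mul_div, div_le_iff₀ hSa] at this
  linarith

/-- key structural fact: the block ratios strictly increase. -/
lemma alf_lt (hapos : ∀ i, 0 < a i) (hbnn : ∀ i, 0 ≤ b i) {i : ℕ}
    (hi : i + 1 < kk a b) : alf a b i < alf a b (i + 1) := by
  by_contra hcon
  push_neg at hcon
  have hi0 : i < kk a b := by omega
  set m := nIdxF a b i with hm
  set s := nIdxF a b (i + 1) with hs
  set t := nIdxF a b (i + 2) with ht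
  have hms : m < s := nIdxF_strict a b hi0
  have hst : s < t := nIdxF_strict a b hi
  have htn : t ≤ n := nIdxF_le a b _
  have hA1 : 0 < Ai a b i := Ai_pos hapos hi0
  have hA2 : 0 < Ai a b (i + 1) := Ai_pos hapos hi
  set α1 := alf a b i
  set α2 := alf a b (i + 1)
  have hB1 : α1 * Ai a b i = Bi a b i := alf_mul hapos hi0
  have hB2 : α2 * Ai a b (i + 1) = Bi a b (i + 1) := alf_mul hapos hi
  have hSat : S a m t = Ai a b i + Ai a b (i + 1) := S_split a hms.le hst.le
  have hSbt : S b m t = Bi a b i + Bi a b (i + 1) := S_split b hms.le hst.le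
  have hSatpos : 0 < S a m t := by rw [hSat]; linarith
  set γ := S b m t / S a m t with hγ
  have hγ_eq : γ * S a m t = S b m t := div_mul_cancel₀ _ hSatpos.ne'
  have hγ1 : γ ≤ α1 := by
    rw [hγ, div_le_iff₀ hSatpos, hSat, hSbt, ← hB1, ← hB2]
    nlinarith [mul_le_mul_of_nonneg_right hcon hA2.le]
  have hγ2 : α2 ≤ γ := by
    rw [hγ, le_div_iff₀ hSatpos, hSat, hSbt, ← hB1, ← hB2]
    nlinarith [mul_le_mul_of_nonneg_right hcon hA2.le]
  have hpre : ∀ pp, m ≤ pp → pp ≤ t → γ * S a m pp ≤ S b m pp := by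
    intro pp hp1 hp2
    rcases le_or_gt pp s with hps | hps
    · have h1 := seg_prefix hapos hi0 hp1 hps
      have h2 : 0 ≤ S a m pp := S_nonneg (fun j => (hapos j).le) _ _
      nlinarith
    · have hSap : S a m pp = Ai a b i + S a s pp := S_split a hms.le hps.le
      have hSbp : S b m pp = Bi a b i + S b s pp := S_split b hms.le hps.le
      have h1 := seg_prefix hapos hi (show s ≤ pp by omega) hp2
      have hta : S a s pp ≤ Ai a b (i + 1) := S_mono_right (fun j => (hapos j).le)
        (show pp ≤ t by omega)
      rw [hSap, hSbp]
      have hkey : γ * (Ai a b i + Ai a b (i+1)) = Bi a b i + Bi a b (i+1) := by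
        rw [← hSat, ← hSbt]; exact hγ_eq
      nlinarith [mul_le_mul_of_nonneg_right (sub_nonneg.mpr hγ2)
        (sub_nonneg.mpr hta)]
  have hmaj : SegMaj a b m t := segMaj_of_prefix hSatpos hpre
  have := nIdxF_max a b hi0 (show m < t by omega) htn hmaj
  omega

lemma alf_mono (hapos : ∀ i, 0 < a i) (hbnn : ∀ i, 0 ≤ b i) {i j : ℕ}
    (hij : i ≤ j) (hj : j < kk a b) : alf a b i ≤ alf a b j := by
  induction j with
  | zero =>
    have : i = 0 := Nat.le_zero.mp hij
    subst this; exact le_refl _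
  | succ j ih =>
    rcases Nat.lt_or_ge i (j + 1) with h | h
    · have h1 : i ≤ j := by omega
      have := alf_lt hapos hbnn (i := j) hj
      rcases Nat.eq_or_lt_of_le h1 with rfl | h2
      · linarith
      · have := ih (by omega) (by omega)
        linarith
    · have : i = j + 1 := by omega
      subst this; exact le_refl _

lemma alf_pos (hapos : ∀ i, 0 < a i) (hbnn : ∀ i, 0 ≤ b i)
    (hB0 : 0 < Bi a b 0) {i : ℕ} (hi : i < kk a b) : 0 < alf a b i := by
  have h0 : 0 < alf a b 0 := div_pos hB0 (Ai_pos hapos (by omega))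
  rcases Nat.eq_zero_or_pos i with rfl | hpos
  · exact h0
  · exact lt_of_lt_of_le h0 (alf_mono hapos hbnn (Nat.zero_le i) hi)

lemma Bi_pos (hapos : ∀ i, 0 < a i) (hbnn : ∀ i, 0 ≤ b i)
    (hB0 : 0 < Bi a b 0) {i : ℕ} (hi : i < kk a b) : 0 < Bi a b i := by
  rw [← alf_mul hapos hi]
  exact mul_pos (alf_pos hapos hbnn hB0 hi) (Ai_pos hapos hi)

/-- first element of block `i`: `α_i a_j ≤ b_j`. -/
lemma first_el (hapos : ∀ i, 0 < a i) {i : ℕ} (hi : i < kk a b) :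
    alf a b i * ext a (nIdxF a b i) ≤ ext b (nIdxF a b i) := by
  have h := seg_prefix hapos hi (pp := nIdxF a b i + 1) (Nat.le_succ _)
    (show nIdxF a b i + 1 ≤ nIdxF a b (i + 1) from nIdxF_strict a b hi)
  rwa [S_single, S_single] at h

/-- last element of block `i`: `b_j ≤ α_i a_j`. -/
lemma last_el (hapos : ∀ i, 0 < a i) {i : ℕ} (hi : i < kk a b) {t : ℕ}
    (h1 : nIdxF a b i ≤ t) (ht : t + 1 = nIdxF a b (i + 1)) :
    ext b t ≤ alf a b i * ext a t := by
  have h2 := seg_prefix hapos hi h1 (show t ≤ nIdxF a b (i+1) by omega)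
  have h3 : alf a b i * Ai a b i = Bi a b i := alf_mul hapos hi
  have h4 : Ai a b i = S a (nIdxF a b i) t + ext a t := by
    rw [Ai, ← ht, S_split a h1 (by omega), S_single]
  have h5 : Bi a b i = S b (nIdxF a b i) t + ext b t := by
    rw [Bi, ← ht, S_split b h1 (by omega), S_single]
  have h6 : alf a b i * (S a (nIdxF a b i) t + ext a t)
      = S b (nIdxF a b i) t + ext b t := by rw [← h4, ← h5]; exact h3
  rw [mul_add] at h6
  linarith

end S19

namespace S19

variable {n : ℕ} {a b : Fin n → ℝ}

noncomputable def xstar (a b : Fin n → ℝ) : Fin n → ℝ :=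
  fun j => alf a b (blk a b (j : ℕ)) * a j

lemma xstar_nonneg (hapos : ∀ i, 0 < a i) (hbnn : ∀ i, 0 ≤ b i) (j : Fin n) :
    0 ≤ xstar a b j :=
  mul_nonneg (alf_nonneg hapos hbnn _) (hapos j).le

lemma ext_xstar {t : ℕ} (ht : t < n) : ext (xstar a b) t = alf a b (blk a b t) * ext a t := by
  simp [ext, ht, xstar]

lemma ext_xstar_blk {i t : ℕ} (hi : i < kk a b) (h1 : nIdxF a b i ≤ t)
    (h2 : t < nIdxF a b (i + 1)) : ext (xstar a b) t = alf a b i * ext a t := by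
  have htn : t < n := lt_of_lt_of_le h2 (nIdxF_le a b _)
  rw [ext_xstar htn, blk_eq a b hi h1 h2]

lemma S_xstar_seg (hi : i < kk a b) {K : ℕ} (h1 : nIdxF a b i ≤ K)
    (h2 : K ≤ nIdxF a b (i + 1)) :
    S (xstar a b) (nIdxF a b i) K = alf a b i * S a (nIdxF a b i) K := by
  rw [S, S, Finset.mul_sum]
  apply Finset.sum_congr rfl
  intro t ht
  rw [Finset.mem_Ico] at ht
  exact ext_xstar_blk hi ht.1 (by omega)

lemma Pre_blocks (g : Fin n → ℝ) (t : ℕ) :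
    Pre g (nIdxF a b t) = ∑ i ∈ Finset.range t, S g (nIdxF a b i) (nIdxF a b (i + 1)) := by
  induction t with
  | zero =>
    simp [Pre, nIdxF, S_empty g (le_refl 0)]
  | succ t ih =>
    rw [Finset.sum_range_succ, ← ih,
      Pre_split g (nIdxF_mono a b (Nat.le_succ t))]

lemma Pre_xstar_bd (hapos : ∀ i, 0 < a i) (t : ℕ) (ht : t ≤ kk a b) :
    Pre (xstar a b) (nIdxF a b t) = Pre b (nIdxF a b t) := by
  rw [Pre_blocks, Pre_blocks]
  apply Finset.sum_congr rfl
  intro i hi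
  rw [Finset.mem_range] at hi
  have hik : i < kk a b := by omega
  rw [S_xstar_seg hik (nIdxF_strict a b hik).le (le_refl _)]
  exact alf_mul hapos hik

lemma Pre_xstar_total (hapos : ∀ i, 0 < a i) :
    Pre (xstar a b) n = Pre b n := by
  have := Pre_xstar_bd (a := a) (b := b) hapos (kk a b) (le_refl _)
  rwa [kk_spec a b] at this

lemma Pre_xstar_le (hapos : ∀ i, 0 < a i) (K : ℕ) :
    Pre (xstar a b) K ≤ Pre b K := by
  rcases le_or_gt n K with h | h
  · rw [Pre_stab _ h, Pre_stab _ h, Pre_xstar_total hapos]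
  · set i := blk a b K with hi
    have hik : i < kk a b := blk_lt a b h
    have h1 : nIdxF a b i ≤ K := blk_le a b K
    have h2 : K < nIdxF a b (i + 1) := blk_ub a b h
    rw [Pre_split (xstar a b) h1, Pre_split b h1, Pre_xstar_bd hapos i hik.le,
      S_xstar_seg hik h1 h2.le]
    have := seg_prefix hapos hik h1 h2.le
    linarith

lemma xstar_antitone (hapos : ∀ i, 0 < a i) (hbnn : ∀ i, 0 ≤ b i)
    (hamono : ∀ i j : Fin n, i ≤ j → a j ≤ a i)
    (hbmono : ∀ i j : Fin n, i ≤ j → b j ≤ b i) :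
    ∀ i j : Fin n, i ≤ j → xstar a b j ≤ xstar a b i := by
  have exstar_anti : ∀ t : ℕ, t + 1 < n → ext (xstar a b) (t + 1) ≤ ext (xstar a b) t := by
    intro t ht
    have htn : t < n := by omega
    set i := blk a b t with hidef
    have hik : i < kk a b := blk_lt a b htn
    have h1 : nIdxF a b i ≤ t := blk_le a b t
    have h2 : t < nIdxF a b (i + 1) := blk_ub a b htn
    rcases lt_or_eq_of_le (show t + 1 ≤ nIdxF a b (i+1) by omega) with hin | hbd
    · -- same block
      rw [ext_xstar_blk hik h1 h2, ext_xstar_blk hik (by omega) hin]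
      apply mul_le_mul_of_nonneg_left _ (alf_nonneg hapos hbnn i)
      exact ext_antitone hamono (fun j => (hapos j).le) (Nat.le_succ t)
    · -- block boundary: t + 1 = nIdxF (i+1)
      have hik1 : i + 1 < kk a b := by
        by_contra hcon
        push_neg at hcon
        have := nIdxF_mono a b hcon
        rw [kk_spec a b] at this
        omega
      have hfst : ext (xstar a b) (t+1) = alf a b (i+1) * ext a (t+1) := by
        apply ext_xstar_blk hik1 (by omega) _
        have := nIdxF_strict a b hik1
        omega
      rw [hfst, ext_xstar_blk hik h1 h2]
      have e1 := first_el (b := b) hapos hik1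
      rw [← hbd] at e1
      have e2 := last_el (b := b) hapos hik h1 hbd
      have e3 : ext b (t+1) ≤ ext b t := ext_antitone hbmono hbnn (Nat.le_succ t)
      linarith
  have key : ∀ d t : ℕ, t + d < n → ext (xstar a b) (t + d) ≤ ext (xstar a b) t := by
    intro d
    induction d with
    | zero => intro t _; exact le_refl _
    | succ d ih =>
      intro t ht
      calc ext (xstar a b) (t + (d+1)) = ext (xstar a b) ((t+d) + 1) := by ring_nf
        _ ≤ ext (xstar a b) (t + d) := exstar_anti _ (by omega)
        _ ≤ ext (xstar a b) t := ih t (by omega)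
  intro i j hij
  have hxi : xstar a b i = ext (xstar a b) (i : ℕ) := by simp [ext, i.isLt]
  have hxj : xstar a b j = ext (xstar a b) (j : ℕ) := by simp [ext, j.isLt]
  rw [hxi, hxj]
  have : (j : ℕ) = (i : ℕ) + ((j : ℕ) - (i : ℕ)) := by omega
  rw [this]
  exact key _ _ (by omega)

end S19

namespace S19

variable {n : ℕ} {a b : Fin n → ℝ} {p q : ℝ}

lemma alf_kk : alf a b (kk a b) = 0 := by
  have h1 : Ai a b (kk a b) = 0 := by
    rw [Ai, kk_spec a b]
    exact S_empty a (nIdxF_le a b _)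
  rw [alf, h1, div_zero]

lemma holder_seg (hp : 0 < p) (hq : 0 < q) (hpq : p + q = 1)
    (hapos : ∀ i, 0 < a i) {y : Fin n → ℝ} (hynn : ∀ i, 0 ≤ y i)
    {m k : ℕ} (hmk : m < k) (hmn : m < n) :
    S (fun j => a j ^ p * y j ^ q) m k ≤ (S a m k) ^ p * (S y m k) ^ q := by
  set g := fun j : Fin n => a j ^ p * y j ^ q with hg
  have hA : 0 < S a m k := S_pos hapos hmk hmn
  have hTnn : 0 ≤ S y m k := S_nonneg hynn m k
  rcases eq_or_lt_of_le hTnn with hT | hT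
  · -- T = 0 : all y entries vanish on the segment
    have hy0 : ∀ t ∈ Finset.Ico m k, ext y t = 0 := by
      intro t ht
      have := (Finset.sum_eq_zero_iff_of_nonneg
        (fun i _ => ext_nonneg hynn i)).mp hT.symm
      exact this t ht
    have hz : S g m k = 0 := by
      apply Finset.sum_eq_zero
      intro t ht
      by_cases htn : t < n
      · have : ext y t = 0 := hy0 t ht
        simp only [ext, htn, dif_pos] at this ⊢
        rw [hg]
        simp only [this, Real.zero_rpow hq.ne', mul_zero]
      · exact ext_eq_zero htn
    rw [hz, ← hT, Real.zero_rpow hq.ne', mul_zero]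
  · have pointwise : ∀ t ∈ Finset.Ico m k, ext g t ≤
        (S a m k) ^ p * (S y m k) ^ q *
          (p * (ext a t / S a m k) + q * (ext y t / S y m k)) := by
      intro t _
      by_cases htn : t < n
      · have ha_t : 0 < ext a t := by simp only [ext, htn, dif_pos]; exact hapos _
        have hy_t : 0 ≤ ext y t := ext_nonneg hynn t
        have gm := Real.geom_mean_le_arith_mean2_weighted hp.le hq.le
          (div_nonneg ha_t.le hA.le) (div_nonneg hy_t hT.le) hpq
        have hfac : 0 ≤ (S a m k) ^ p * (S y m k) ^ q :=
          mul_nonneg (Real.rpow_nonneg hA.le p) (Real.rpow_nonneg hT.le q)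
        have hmul := mul_le_mul_of_nonneg_left gm hfac
        have hLHS : (S a m k) ^ p * (S y m k) ^ q *
            ((ext a t / S a m k) ^ p * (ext y t / S y m k) ^ q) = ext g t := by
          rw [Real.div_rpow ha_t.le hA.le, Real.div_rpow hy_t hT.le]
          have hge : ext g t = ext a t ^ p * ext y t ^ q := by
            simp [ext, htn, hg]
          rw [hge]
          have h1 : (S a m k : ℝ) ^ p ≠ 0 := (Real.rpow_pos_of_pos hA p).ne'
          have h2 : (S y m k : ℝ) ^ q ≠ 0 := (Real.rpow_pos_of_pos hT q).ne'
          field_simp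
        rw [hLHS] at hmul
        exact hmul
      · rw [ext_eq_zero (v := g) htn, ext_eq_zero (v := a) htn,
          ext_eq_zero (v := y) htn]
        have : p * ((0:ℝ) / S a m k) + q * ((0:ℝ) / S y m k) = 0 := by simp
        rw [this, mul_zero]
    calc S g m k ≤ ∑ t ∈ Finset.Ico m k, (S a m k) ^ p * (S y m k) ^ q *
          (p * (ext a t / S a m k) + q * (ext y t / S y m k)) :=
        Finset.sum_le_sum pointwise
      _ = (S a m k) ^ p * (S y m k) ^ q *
          ∑ t ∈ Finset.Ico m k, (p * (ext a t / S a m k) + q * (ext y t / S y m k)) := by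
        rw [Finset.mul_sum]
      _ = (S a m k) ^ p * (S y m k) ^ q := by
        rw [Finset.sum_add_distrib]
        have e1 : ∑ t ∈ Finset.Ico m k, p * (ext a t / S a m k) = p := by
          rw [← Finset.mul_sum, ← Finset.sum_div]
          rw [show ∑ t ∈ Finset.Ico m k, ext a t = S a m k from rfl,
            div_self hA.ne', mul_one]
        have e2 : ∑ t ∈ Finset.Ico m k, q * (ext y t / S y m k) = q := by
          rw [← Finset.mul_sum, ← Finset.sum_div]
          rw [show ∑ t ∈ Finset.Ico m k, ext y t = S y m k from rfl,
            div_self hT.ne', mul_one]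
        rw [e1, e2, hpq, mul_one]

lemma fxstar_val (hq : 0 < q) (hpq : p + q = 1)
    (hapos : ∀ i, 0 < a i) (hbnn : ∀ i, 0 ≤ b i) :
    Pre (fun j => a j ^ p * xstar a b j ^ q) n
      = ∑ i ∈ Finset.range (kk a b), (Ai a b i) ^ p * (Bi a b i) ^ q := by
  have h := Pre_blocks (a := a) (b := b) (fun j => a j ^ p * xstar a b j ^ q) (kk a b)
  rw [kk_spec a b] at h
  rw [h]
  apply Finset.sum_congr rfl
  intro i hi
  rw [Finset.mem_range] at hi
  have hAi := Ai_pos hapos hi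
  have halfnn := alf_nonneg (b := b) hapos hbnn i
  have hblock : S (fun j => a j ^ p * xstar a b j ^ q) (nIdxF a b i) (nIdxF a b (i+1))
      = alf a b i ^ q * Ai a b i := by
    rw [S, Ai, S, Finset.mul_sum]
    apply Finset.sum_congr rfl
    intro t ht
    rw [Finset.mem_Ico] at ht
    have htn : t < n := lt_of_lt_of_le ht.2 (nIdxF_le a b _)
    have hxs : ext (fun j => a j ^ p * xstar a b j ^ q) t
        = ext a t ^ p * (alf a b i * ext a t) ^ q := by
      simp only [ext, htn, dif_pos]
      congr 1
      have := ext_xstar_blk (a := a) (b := b) hi ht.1 ht.2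
      simp only [ext, htn, dif_pos] at this
      rw [this]
    rw [hxs]
    have ha_t : 0 < ext a t := by simp only [ext, htn, dif_pos]; exact hapos _
    rw [Real.mul_rpow halfnn ha_t.le]
    rw [show ext a t ^ p * (alf a b i ^ q * ext a t ^ q)
        = alf a b i ^ q * (ext a t ^ p * ext a t ^ q) by ring]
    rw [← Real.rpow_add ha_t, hpq, Real.rpow_one]
  rw [hblock]
  rw [← alf_mul hapos hi, Real.mul_rpow halfnn hAi.le]
  rw [show Ai a b i ^ p * (alf a b i ^ q * Ai a b i ^ q)
      = alf a b i ^ q * (Ai a b i ^ p * Ai a b i ^ q) by ring]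
  rw [← Real.rpow_add hAi, hpq, Real.rpow_one]

lemma upper_bound (hp : 0 < p) (hq : 0 < q) (hpq : p + q = 1)
    (hapos : ∀ i, 0 < a i) (hbnn : ∀ i, 0 ≤ b i) (hB0 : 0 < Bi a b 0)
    (y : Fin n → ℝ) (hynn : ∀ i, 0 ≤ y i)
    (hpre : ∀ K, Pre y K ≤ Pre b K) (htot : Pre y n = Pre b n) :
    Pre (fun j => a j ^ p * y j ^ q) n
      ≤ ∑ i ∈ Finset.range (kk a b), (Ai a b i) ^ p * (Bi a b i) ^ q := by
  have hq1 : q < 1 := by linarith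
  set Ti := fun i => S y (nIdxF a b i) (nIdxF a b (i+1)) with hTi
  have htel : Pre (fun j => a j ^ p * y j ^ q) n
      = ∑ i ∈ Finset.range (kk a b), S (fun j => a j ^ p * y j ^ q)
          (nIdxF a b i) (nIdxF a b (i+1)) := by
    have h := Pre_blocks (a := a) (b := b) (fun j => a j ^ p * y j ^ q) (kk a b)
    rwa [kk_spec a b] at h
  have hTy : ∀ t : ℕ, ∑ i ∈ Finset.range t, Ti i = Pre y (nIdxF a b t) :=
    fun t => (Pre_blocks y t).symm
  have hTb : ∀ t : ℕ, ∑ i ∈ Finset.range t, Bi a b i = Pre b (nIdxF a b t) :=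
    fun t => (Pre_blocks b t).symm
  have step1 : ∀ i ∈ Finset.range (kk a b),
      S (fun j => a j ^ p * y j ^ q) (nIdxF a b i) (nIdxF a b (i+1))
        ≤ (Ai a b i) ^ p * (Ti i) ^ q := by
    intro i hi
    rw [Finset.mem_range] at hi
    exact holder_seg hp hq hpq hapos hynn (nIdxF_strict a b hi) (lt_of_lt_kk a b hi)
  have step2 : ∀ i ∈ Finset.range (kk a b),
      (Ai a b i) ^ p * (Ti i) ^ q ≤ (Ai a b i) ^ p * (Bi a b i) ^ q
        + (q * alf a b i ^ (q - 1)) * (Ti i - Bi a b i) := by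
    intro i hi
    rw [Finset.mem_range] at hi
    have hAi := Ai_pos hapos hi
    have hBi := Bi_pos hapos hbnn hB0 hi
    have halfp := alf_pos hapos hbnn hB0 hi
    have htan := rpow_tangent hq hq1 (S_nonneg hynn _ _ : (0:ℝ) ≤ Ti i) hBi
    have hmul := mul_le_mul_of_nonneg_left htan (Real.rpow_nonneg hAi.le p)
    have hid : (Ai a b i) ^ p * (Bi a b i) ^ (q - 1) = alf a b i ^ (q - 1) := by
      rw [← alf_mul hapos hi, Real.mul_rpow halfp.le hAi.le]
      rw [show Ai a b i ^ p * (alf a b i ^ (q-1) * Ai a b i ^ (q-1))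
          = alf a b i ^ (q-1) * (Ai a b i ^ p * Ai a b i ^ (q-1)) by ring]
      rw [← Real.rpow_add hAi, show p + (q - 1) = 0 by linarith, Real.rpow_zero, mul_one]
    have hexp : (Ai a b i) ^ p * ((Bi a b i) ^ q + q * (Bi a b i) ^ (q-1) * (Ti i - Bi a b i))
        = (Ai a b i) ^ p * (Bi a b i) ^ q
          + (q * alf a b i ^ (q - 1)) * (Ti i - Bi a b i) := by
      rw [← hid]; ring
    linarith [hmul, hexp.symm.le, hexp.le]
  have step3 : ∑ i ∈ Finset.range (kk a b),
      (q * alf a b i ^ (q - 1)) * (Ti i - Bi a b i) ≤ 0 := by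
    have hc : ∀ i j, i ≤ j → j ≤ kk a b →
        q * alf a b j ^ (q - 1) ≤ q * alf a b i ^ (q - 1) := by
      intro i j hij hjk
      rcases lt_or_eq_of_le hjk with hj | hj
      · have hik : i < kk a b := by omega
        have h1 := alf_mono hapos hbnn hij hj
        have h2 := alf_pos hapos hbnn hB0 hik
        exact mul_le_mul_of_nonneg_left
          (Real.rpow_le_rpow_of_nonpos h2 h1 (by linarith)) hq.le
      · subst hj
        rcases lt_or_eq_of_le hij with hi | hi
        · rw [alf_kk, Real.zero_rpow (show q - 1 ≠ 0 by intro h; linarith), mul_zero]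
          exact mul_nonneg hq.le
            (Real.rpow_nonneg (alf_pos hapos hbnn hB0 hi).le _)
        · subst hi; exact le_refl _
    have hD : ∀ j ≤ kk a b, ∑ i ∈ Finset.range j, (Ti i - Bi a b i) ≤ 0 := by
      intro j hj
      rw [Finset.sum_sub_distrib, hTy, hTb]
      have := hpre (nIdxF a b j)
      linarith
    have hab := abel_le (c := fun i => q * alf a b i ^ (q - 1))
      (d := fun i => Ti i - Bi a b i) (kk a b) hc hD
    have hSd : ∑ i ∈ Finset.range (kk a b), (Ti i - Bi a b i) = 0 := by
      rw [Finset.sum_sub_distrib, hTy, hTb, kk_spec a b, htot, sub_self]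
    rw [hSd, mul_zero] at hab
    exact hab
  calc Pre (fun j => a j ^ p * y j ^ q) n
      = ∑ i ∈ Finset.range (kk a b), S (fun j => a j ^ p * y j ^ q)
          (nIdxF a b i) (nIdxF a b (i+1)) := htel
    _ ≤ ∑ i ∈ Finset.range (kk a b), (Ai a b i) ^ p * (Ti i) ^ q :=
        Finset.sum_le_sum step1
    _ ≤ ∑ i ∈ Finset.range (kk a b), ((Ai a b i) ^ p * (Bi a b i) ^ q
          + (q * alf a b i ^ (q - 1)) * (Ti i - Bi a b i)) :=
        Finset.sum_le_sum step2
    _ = (∑ i ∈ Finset.range (kk a b), (Ai a b i) ^ p * (Bi a b i) ^ q)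
          + ∑ i ∈ Finset.range (kk a b), (q * alf a b i ^ (q - 1)) * (Ti i - Bi a b i) :=
        Finset.sum_add_distrib
    _ ≤ _ := by linarith [step3]

end S19


/-- If `a` is decreasing and positive, `b` decreasing nonnegative, and `x`
is a decreasing nonnegative vector with `x ≺ b` maximizing `Σ a_j^p y_j^q` over decreasing
nonnegative `y ≺ b`, then there is a partition `0 = n_0 < n_1 < ⋯ < n_k = n` such that on each
block the sums of `x` and `b` agree, `x` is the scalar multiple
`(Σ b)/(Σ a)` of `a`, and each `n_{i+1}` is the largest `r` for which the normalized segment of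
`a` on `(n_i, r]` is majorized by the corresponding normalized segment of `b`. -/
theorem stmt_19 {n : ℕ} (p q : ℝ) (hp : 0 < p) (hq : 0 < q) (hpq : p + q = 1)
    (a b x : Fin n → ℝ)
    (hamono : ∀ i j : Fin n, i ≤ j → a j ≤ a i) (hapos : ∀ i, 0 < a i)
    (hbmono : ∀ i j : Fin n, i ≤ j → b j ≤ b i) (hbnn : ∀ i, 0 ≤ b i)
    (hxmono : ∀ i j : Fin n, i ≤ j → x j ≤ x i) (hxnn : ∀ i, 0 ≤ x i)
    (hxb : Majorizes x b)
    (hopt : ∀ y : Fin n → ℝ, (∀ i j : Fin n, i ≤ j → y j ≤ y i) → (∀ i, 0 ≤ y i) →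
      Majorizes y b → (∑ j, a j ^ p * y j ^ q) ≤ ∑ j, a j ^ p * x j ^ q) :
    ∃ (k : ℕ) (nIdx : ℕ → ℕ), nIdx 0 = 0 ∧ nIdx k = n ∧
      (∀ i < k, nIdx i < nIdx (i + 1)) ∧
      ∀ i < k,
        segSum x (nIdx i) (nIdx (i + 1)) = segSum b (nIdx i) (nIdx (i + 1)) ∧
        (∀ j : Fin n, nIdx i ≤ (j : ℕ) → (j : ℕ) < nIdx (i + 1) →
          x j * segSum a (nIdx i) (nIdx (i + 1)) = segSum b (nIdx i) (nIdx (i + 1)) * a j) ∧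
        SegMaj a b (nIdx i) (nIdx (i + 1)) ∧
        ∀ r : ℕ, nIdx i < r → r ≤ n → SegMaj a b (nIdx i) r → r ≤ nIdx (i + 1) := by
  classical
  have main : ∀ i < S19.kk a b,
      segSum x (S19.nIdxF a b i) (S19.nIdxF a b (i + 1))
        = segSum b (S19.nIdxF a b i) (S19.nIdxF a b (i + 1)) ∧
      (∀ j : Fin n, S19.nIdxF a b i ≤ (j : ℕ) → (j : ℕ) < S19.nIdxF a b (i + 1) →
        x j * segSum a (S19.nIdxF a b i) (S19.nIdxF a b (i + 1))
          = segSum b (S19.nIdxF a b i) (S19.nIdxF a b (i + 1)) * a j) := by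
    by_cases hb0 : ∀ j, b j = 0
    · -- degenerate case: b ≡ 0 so x ≡ 0
      have hx0 : ∀ j, x j = 0 := by
        have hsum : ∑ j, x j = 0 := by
          rw [hxb.2]; exact Finset.sum_eq_zero (fun j _ => hb0 j)
        intro j
        exact (Finset.sum_eq_zero_iff_of_nonneg (fun j _ => hxnn j)).mp hsum j
          (Finset.mem_univ j)
      have hz : ∀ (v : Fin n → ℝ), (∀ j, v j = 0) → ∀ m k, segSum v m k = 0 := by
        intro v hv m k
        rw [S19.segSum_eq]
        apply Finset.sum_eq_zero
        intro t _
        unfold S19.ext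
        split <;> simp [hv]
      intro i _
      refine ⟨?_, ?_⟩
      · rw [hz x hx0, hz b hb0]
      · intro j _ _
        rw [hx0 j, hz b hb0, zero_mul, zero_mul]
    · -- main case
      push_neg at hb0
      obtain ⟨j0, hj0⟩ := hb0
      have hn : 0 < n := j0.pos
      have hkpos : 0 < S19.kk a b := by
        by_contra hc
        push_neg at hc
        have h0 : S19.kk a b = 0 := by omega
        have := S19.kk_spec a b
        rw [h0] at this
        simp [S19.nIdxF] at this
        omega
      have hB0 : 0 < S19.Bi a b 0 := by
        have h1 : 0 < S19.nIdxF a b 1 := by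
          have := S19.nIdxF_strict a b hkpos
          simpa [S19.nIdxF] using this
        have h2 : S19.ext b 0 ≤ S19.S b 0 (S19.nIdxF a b 1) :=
          S19.single_le_S hbnn h1
        have h3 : S19.ext b 0 = b ⟨0, hn⟩ := by simp [S19.ext, hn]
        have h4 : 0 < b ⟨0, hn⟩ := by
          have := hbmono ⟨0, hn⟩ j0 (by simp [Fin.le_def])
          have h5 : 0 < b j0 := lt_of_le_of_ne (hbnn j0) (Ne.symm hj0)
          linarith
        have h6 : S19.Bi a b 0 = S19.S b 0 (S19.nIdxF a b 1) := by
          rw [S19.Bi]; rfl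
        rw [h6]
        linarith [h2, h3 ▸ h4]
      obtain ⟨hxpre, hxtot⟩ := (S19.maj_iff hxmono hbmono).mp hxb
      have hxs_anti := S19.xstar_antitone (b := b) hapos hbnn hamono hbmono
      have hxs_nn := S19.xstar_nonneg (b := b) hapos hbnn
      have hxs_pre := S19.Pre_xstar_le (b := b) hapos
      have hxs_tot := S19.Pre_xstar_total (b := b) hapos
      have hmaj_xstar : Majorizes (S19.xstar a b) b :=
        (S19.maj_iff hxs_anti hbmono).mpr ⟨hxs_pre, hxs_tot⟩
      set M := ∑ i ∈ Finset.range (S19.kk a b), (S19.Ai a b i) ^ p * (S19.Bi a b i) ^ q with hM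
      have hub_x : S19.Pre (fun j => a j ^ p * x j ^ q) n ≤ M :=
        S19.upper_bound hp hq hpq hapos hbnn hB0 x hxnn hxpre hxtot
      have hval : S19.Pre (fun j => a j ^ p * S19.xstar a b j ^ q) n = M :=
        S19.fxstar_val hq hpq hapos hbnn
      have hopt_xs := hopt (S19.xstar a b) hxs_anti hxs_nn hmaj_xstar
      rw [S19.total_eq_Pre (fun j => a j ^ p * S19.xstar a b j ^ q),
        S19.total_eq_Pre (fun j => a j ^ p * x j ^ q)] at hopt_xs
      have hfx : S19.Pre (fun j => a j ^ p * x j ^ q) n = M := le_antisymm hub_x (by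
        rw [← hval]; exact hopt_xs)
      -- uniqueness via strict concavity
      have hxeq : ∀ j, x j = S19.xstar a b j := by
        by_contra hne
        push_neg at hne
        obtain ⟨jd, hjd⟩ := hne
        set z := fun j => (x j + S19.xstar a b j) / 2 with hzdef
        have hz_anti : ∀ i j : Fin n, i ≤ j → z j ≤ z i := by
          intro i j hij
          have h1 := hxmono i j hij
          have h2 := hxs_anti i j hij
          simp only [hzdef]
          linarith
        have hz_nn : ∀ j, 0 ≤ z j := by
          intro j
          have := hxnn j; have := hxs_nn j
          simp only [hzdef]; linarith
        have hPz : ∀ K, S19.Pre z K = (S19.Pre x K + S19.Pre (S19.xstar a b) K) / 2 := by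
          intro K
          rw [S19.Pre, S19.Pre, S19.Pre, S19.S, S19.S, S19.S, ← Finset.sum_add_distrib, Finset.sum_div]
          apply Finset.sum_congr rfl
          intro t _
          unfold S19.ext
          split <;> simp [hzdef]
        have hmaj_z : Majorizes z b := by
          rw [S19.maj_iff hz_anti hbmono]
          constructor
          · intro K
            rw [hPz K]
            have := hxpre K; have := hxs_pre K
            linarith
          · rw [hPz n, hxtot, hxs_tot]; ring
        have hopt_z := hopt z hz_anti hz_nn hmaj_z
        have hstrict : (∑ j, a j ^ p * x j ^ q) < ∑ j, a j ^ p * z j ^ q := by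
          have hle : ∀ j : Fin n, j ∈ Finset.univ →
              (a j ^ p * x j ^ q + a j ^ p * S19.xstar a b j ^ q) / 2 ≤ a j ^ p * z j ^ q := by
            intro j _
            have hmid := S19.rpow_mid_le hq (by linarith) (hxnn j) (hxs_nn j)
            have hap : (0:ℝ) ≤ a j ^ p := Real.rpow_nonneg (hapos j).le p
            have := mul_le_mul_of_nonneg_left hmid hap
            calc (a j ^ p * x j ^ q + a j ^ p * S19.xstar a b j ^ q) / 2
                = a j ^ p * ((x j ^ q + S19.xstar a b j ^ q) / 2) := by ring
              _ ≤ a j ^ p * (((x j + S19.xstar a b j) / 2) ^ q) := this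
              _ = a j ^ p * z j ^ q := rfl
          have hlt : ∃ j ∈ Finset.univ, (a j ^ p * x j ^ q +
              a j ^ p * S19.xstar a b j ^ q) / 2 < a j ^ p * z j ^ q := by
            refine ⟨jd, Finset.mem_univ jd, ?_⟩
            have hmid := S19.rpow_mid hq (by linarith) (hxnn jd) (hxs_nn jd) hjd
            have hap : (0:ℝ) < a jd ^ p := Real.rpow_pos_of_pos (hapos jd) p
            have := mul_lt_mul_of_pos_left hmid hap
            calc (a jd ^ p * x jd ^ q + a jd ^ p * S19.xstar a b jd ^ q) / 2
                = a jd ^ p * ((x jd ^ q + S19.xstar a b jd ^ q) / 2) := by ring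
              _ < a jd ^ p * (((x jd + S19.xstar a b jd) / 2) ^ q) := this
              _ = a jd ^ p * z jd ^ q := rfl
          have hsum := Finset.sum_lt_sum hle hlt
          have heq : ∑ j : Fin n, (a j ^ p * x j ^ q + a j ^ p * S19.xstar a b j ^ q) / 2
              = ∑ j, a j ^ p * x j ^ q := by
            rw [← Finset.sum_div, Finset.sum_add_distrib]
            have e1 : ∑ j, a j ^ p * x j ^ q = M := by
              rw [S19.total_eq_Pre (fun j => a j ^ p * x j ^ q)]; exact hfx
            have e2 : ∑ j, a j ^ p * S19.xstar a b j ^ q = M := by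
              rw [S19.total_eq_Pre (fun j => a j ^ p * S19.xstar a b j ^ q)]; exact hval
            rw [e1, e2]
            linarith
          rwa [heq] at hsum
        linarith
      -- conclude the two block properties
      intro i hi
      have hseg_x : S19.S x (S19.nIdxF a b i) (S19.nIdxF a b (i+1))
          = S19.S (S19.xstar a b) (S19.nIdxF a b i) (S19.nIdxF a b (i+1)) := by
        apply Finset.sum_congr rfl
        intro t _
        unfold S19.ext
        split
        · exact hxeq _
        · rfl
      have hxsblk := S19.S_xstar_seg (a := a) (b := b) hi
        (S19.nIdxF_strict a b hi).le (le_refl _)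
      refine ⟨?_, ?_⟩
      · rw [S19.segSum_eq, S19.segSum_eq, hseg_x, hxsblk]
        have := S19.alf_mul (b := b) hapos hi
        rw [show S19.S a (S19.nIdxF a b i) (S19.nIdxF a b (i+1)) = S19.Ai a b i from rfl,
          this]
        rfl
      · intro j h1 h2
        have hxj : x j = S19.alf a b i * a j := by
          rw [hxeq j, S19.xstar, S19.blk_eq a b hi h1 h2]
        rw [hxj, S19.segSum_eq, S19.segSum_eq,
          show S19.S a (S19.nIdxF a b i) (S19.nIdxF a b (i+1)) = S19.Ai a b i from rfl,
          show S19.S b (S19.nIdxF a b i) (S19.nIdxF a b (i+1)) = S19.Bi a b i from rfl,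
          ← S19.alf_mul (b := b) hapos hi]
        ring
  exact ⟨S19.kk a b, S19.nIdxF a b, rfl, S19.kk_spec a b,
    fun i hi => S19.nIdxF_strict a b hi,
    fun i hi => ⟨(main i hi).1, (main i hi).2, S19.nIdxF_seg a b hi,
      fun r h1 h2 h3 => S19.nIdxF_max a b hi h1 h2 h3⟩⟩
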